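/- arXiv:2107.02605 — 5 statements merged into one kernel-verified Lean document; each statement's English description precedes it below -/
import Mathlib

section
/- Let γ ∈ (0,1), x a nonnegative integer, and let p : {0,…,x} → ℝ≥0 be a probability mass function symmetric about x/2 (i.e., p(y) = p(x−y) for all y). Define θ(x,p) := Σ_{y=0}^x p(y) (1/2)^y (1−γ)^{y−1}. If p₁ centrally dominates p₂ (there exists z ∈ [0, x/2] such that p₁(y) ≥ p₂(y) for all integer y with |y − x/2| ≤ z, and p₁(y) ≤ p₂(y) for all integer y with |y − x/2| > z), then θ(x,p₁) ≤ θ(x,p₂). -/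
/-- Monotonicity of t ↦ r^(c-t) + r^(c+t) for 0 < r ≤ 1. -/
lemma cosh_mono_aux (r : ℝ) (hr0 : 0 < r) (hr1 : r ≤ 1) (c a b : ℝ)
    (ha : 0 ≤ a) (hab : a ≤ b) :
    r ^ (c - a) + r ^ (c + a) ≤ r ^ (c - b) + r ^ (c + b) := by
  have h1 : r ^ (c + a) ≤ r ^ (c - b) :=
    Real.rpow_le_rpow_of_exponent_ge hr0 hr1 (by linarith)
  have h2 : r ^ (b - a) ≤ 1 := Real.rpow_le_one hr0.le hr1 (by linarith)
  have e1 : r ^ (c - b) * r ^ (b - a) = r ^ (c - a) := by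
    rw [← Real.rpow_add hr0]; ring_nf
  have e2 : r ^ (c + a) * r ^ (b - a) = r ^ (c + b) := by
    rw [← Real.rpow_add hr0]; ring_nf
  nlinarith [mul_nonneg (sub_nonneg.2 h1) (sub_nonneg.2 h2)]

theorem stmt_3 (γ : ℝ) (hγ0 : 0 < γ) (hγ1 : γ < 1) (x : ℕ)
    (p₁ p₂ : ℕ → ℝ)
    (h₁0 : ∀ y, 0 ≤ p₁ y) (h₂0 : ∀ y, 0 ≤ p₂ y)
    (h₁sum : ∑ y ∈ Finset.range (x + 1), p₁ y = 1)
    (h₂sum : ∑ y ∈ Finset.range (x + 1), p₂ y = 1)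
    (h₁sym : ∀ y ≤ x, p₁ (x - y) = p₁ y)
    (h₂sym : ∀ y ≤ x, p₂ (x - y) = p₂ y)
    (hdom : ∃ z : ℝ, 0 ≤ z ∧ z ≤ (x : ℝ) / 2 ∧
      ∀ y ≤ x, (|(y : ℝ) - (x : ℝ) / 2| ≤ z → p₂ y ≤ p₁ y) ∧
               (z < |(y : ℝ) - (x : ℝ) / 2| → p₁ y ≤ p₂ y)) :
    ∑ y ∈ Finset.range (x + 1), p₁ y * (1 / 2 : ℝ) ^ y * (1 - γ) ^ ((y : ℤ) - 1) ≤
    ∑ y ∈ Finset.range (x + 1), p₂ y * (1 / 2 : ℝ) ^ y * (1 - γ) ^ ((y : ℤ) - 1) := by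
  have h1γ : 0 < 1 - γ := by linarith
  have hne : (1 - γ) ≠ 0 := ne_of_gt h1γ
  set r : ℝ := (1 - γ) / 2 with hr
  have hr0 : 0 < r := by positivity
  have hr1 : r ≤ 1 := by rw [hr]; linarith
  set c : ℝ := (x : ℝ) / 2 with hc
  -- rewrite each term
  have hterm : ∀ (p : ℕ → ℝ) (y : ℕ),
      p y * (1 / 2 : ℝ) ^ y * (1 - γ) ^ ((y : ℤ) - 1)
        = (p y * r ^ y) * (1 - γ)⁻¹ := by
    intro p y
    have : (1 - γ : ℝ) ^ ((y : ℤ) - 1) = (1 - γ) ^ y * (1 - γ)⁻¹ := by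
      rw [zpow_sub₀ hne, zpow_natCast, zpow_one, div_eq_mul_inv]
    rw [this, hr, div_pow, div_pow]
    ring
  simp only [hterm]
  rw [← Finset.sum_mul, ← Finset.sum_mul]
  apply mul_le_mul_of_nonneg_right _ (by positivity)
  -- symmetrization lemma
  have hsymm : ∀ (p : ℕ → ℝ), (∀ y ≤ x, p (x - y) = p y) →
      ∑ y ∈ Finset.range (x + 1), p y * r ^ (x - y)
        = ∑ y ∈ Finset.range (x + 1), p y * r ^ y := by
    intro p hp
    have := Finset.sum_range_reflect (fun y => p y * r ^ y) (x + 1)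
    simp only [Nat.add_sub_cancel] at this
    rw [← this]
    apply Finset.sum_congr rfl
    intro y hy
    rw [hp y (Nat.lt_succ_iff.mp (Finset.mem_range.mp hy))]
  -- reduce to symmetrized sums
  have hhalf : ∀ (p : ℕ → ℝ), (∀ y ≤ x, p (x - y) = p y) →
      ∑ y ∈ Finset.range (x + 1), p y * r ^ y
        = (∑ y ∈ Finset.range (x + 1), p y * (r ^ y + r ^ (x - y))) / 2 := by
    intro p hp
    rw [eq_div_iff (by norm_num : (2:ℝ) ≠ 0)]
    rw [Finset.sum_mul]
    have : ∀ y, p y * (r ^ y + r ^ (x - y)) = p y * r ^ y + p y * r ^ (x - y) := by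
      intro y; ring
    simp only [this]
    rw [Finset.sum_add_distrib, hsymm p hp, ← Finset.sum_add_distrib]
    exact Finset.sum_congr rfl fun y _ => by ring
  rw [hhalf p₁ h₁sym, hhalf p₂ h₂sym]
  apply div_le_div_of_nonneg_right _ (by norm_num)
  -- bridge: r^y + r^(x-y) = r^(c - |y-c|) + r^(c + |y-c|)
  have hbridge : ∀ y ≤ x, (r ^ y + r ^ (x - y) : ℝ)
      = r ^ (c - |(y : ℝ) - c|) + r ^ (c + |(y : ℝ) - c|) := by
    intro y hy
    have hcast : ((x - y : ℕ) : ℝ) = (x : ℝ) - y := by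
      rw [Nat.cast_sub hy]
    rcases le_total ((y : ℝ)) c with h | h
    · have habs : |(y : ℝ) - c| = c - (y : ℝ) := by
        rw [abs_of_nonpos (by linarith)]; ring
      rw [habs]
      have e1 : c - (c - (y : ℝ)) = (y : ℝ) := by ring
      have e2 : c + (c - (y : ℝ)) = ((x - y : ℕ) : ℝ) := by
        rw [hcast, hc]; ring
      rw [e1, e2, Real.rpow_natCast, Real.rpow_natCast]
    · have habs : |(y : ℝ) - c| = (y : ℝ) - c := abs_of_nonneg (by linarith)
      rw [habs]
      have e1 : c - ((y : ℝ) - c) = ((x - y : ℕ) : ℝ) := by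
        rw [hcast, hc]; ring
      have e2 : c + ((y : ℝ) - c) = (y : ℝ) := by ring
      rw [e1, e2, Real.rpow_natCast, Real.rpow_natCast]
      ring
  -- threshold argument
  obtain ⟨z, hz0, hzc, hdy⟩ := hdom
  set G : ℝ := r ^ (c - z) + r ^ (c + z) with hG
  have key : ∀ y ∈ Finset.range (x + 1),
      (p₂ y - p₁ y) * G ≤ (p₂ y - p₁ y) * (r ^ y + r ^ (x - y)) := by
    intro y hy
    have hyx : y ≤ x := Nat.lt_succ_iff.mp (Finset.mem_range.mp hy)
    rw [hbridge y hyx]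
    rcases le_or_gt |(y : ℝ) - c| z with h | h
    · have hp : p₂ y ≤ p₁ y := (hdy y hyx).1 h
      have hm : r ^ (c - |(y : ℝ) - c|) + r ^ (c + |(y : ℝ) - c|) ≤ G :=
        cosh_mono_aux r hr0 hr1 c _ z (abs_nonneg _) h
      nlinarith
    · have hp : p₁ y ≤ p₂ y := (hdy y hyx).2 h
      have hm : G ≤ r ^ (c - |(y : ℝ) - c|) + r ^ (c + |(y : ℝ) - c|) :=
        cosh_mono_aux r hr0 hr1 c z _ hz0 h.le
      nlinarith
  have hsum := Finset.sum_le_sum key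
  rw [← Finset.sum_mul, Finset.sum_sub_distrib, h₁sum, h₂sum] at hsum
  simp only [sub_self, zero_mul] at hsum
  have : ∀ y, (p₂ y - p₁ y) * (r ^ y + r ^ (x - y))
      = p₂ y * (r ^ y + r ^ (x - y)) - p₁ y * (r ^ y + r ^ (x - y)) := by
    intro y; ring
  simp only [this] at hsum
  rw [Finset.sum_sub_distrib] at hsum
  linarith
end

section
/- Let γ ∈ (0,1), x ≥ 2 an integer, and θ'(x,p) := Σ_{y=0}^x p(y) (1/2)^y (1−γ)^{max(y−1,0)} for a probability mass function p on {0,…,x}. If p₁, p₂ are symmetric about x/2 and p₁ centrally dominates p₂, then θ'(x,p₁) ≤ θ'(x,p₂). -/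
theorem stmt_4 (γ : ℝ) (hγ0 : 0 < γ) (hγ1 : γ < 1) (x : ℕ) (hx : 2 ≤ x)
    (p₁ p₂ : ℕ → ℝ)
    (h₁0 : ∀ y, 0 ≤ p₁ y) (h₂0 : ∀ y, 0 ≤ p₂ y)
    (h₁sum : ∑ y ∈ Finset.range (x + 1), p₁ y = 1)
    (h₂sum : ∑ y ∈ Finset.range (x + 1), p₂ y = 1)
    (h₁sym : ∀ y ≤ x, p₁ (x - y) = p₁ y)
    (h₂sym : ∀ y ≤ x, p₂ (x - y) = p₂ y)
    (hdom : ∃ z : ℝ, 0 ≤ z ∧ z ≤ (x : ℝ) / 2 ∧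
      ∀ y ≤ x, (|(y : ℝ) - (x : ℝ) / 2| ≤ z → p₂ y ≤ p₁ y) ∧
               (z < |(y : ℝ) - (x : ℝ) / 2| → p₁ y ≤ p₂ y)) :
    ∑ y ∈ Finset.range (x + 1), p₁ y * (1 / 2 : ℝ) ^ y * (1 - γ) ^ (y - 1) ≤
    ∑ y ∈ Finset.range (x + 1), p₂ y * (1 / 2 : ℝ) ^ y * (1 - γ) ^ (y - 1) := by
  obtain ⟨z, hz0, hz2, hdom⟩ := hdom
  have hγ' : 0 < 1 - γ := by linarith
  set f : ℕ → ℝ := fun y => (1/2:ℝ)^y * (1-γ)^(y-1) with hfdef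
  have hf : ∀ y, f y = (1/2:ℝ)^y * (1-γ)^(y-1) := fun y => rfl
  have hfpos : ∀ y, 0 < f y := by intro y; rw [hf]; positivity
  -- the goal in terms of f
  have hgoal : (∑ y ∈ Finset.range (x + 1), p₁ y * f y ≤
      ∑ y ∈ Finset.range (x + 1), p₂ y * f y) →
      ∑ y ∈ Finset.range (x + 1), p₁ y * (1 / 2 : ℝ) ^ y * (1 - γ) ^ (y - 1) ≤
      ∑ y ∈ Finset.range (x + 1), p₂ y * (1 / 2 : ℝ) ^ y * (1 - γ) ^ (y - 1) := by
    intro h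
    calc ∑ y ∈ Finset.range (x + 1), p₁ y * (1 / 2 : ℝ) ^ y * (1 - γ) ^ (y - 1)
        = ∑ y ∈ Finset.range (x + 1), p₁ y * f y := by
          apply Finset.sum_congr rfl; intro y _; rw [hf]; ring
      _ ≤ ∑ y ∈ Finset.range (x + 1), p₂ y * f y := h
      _ = ∑ y ∈ Finset.range (x + 1), p₂ y * (1 / 2 : ℝ) ^ y * (1 - γ) ^ (y - 1) := by
          apply Finset.sum_congr rfl; intro y _; rw [hf]; ring
  apply hgoal
  -- trivial case: no inner points
  by_cases hT : ∀ y ∈ Finset.range (x+1), z < |(y:ℝ) - (x:ℝ)/2|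
  · apply Finset.sum_le_sum
    intro y hy
    have hyx : y ≤ x := by simpa [Nat.lt_succ_iff] using Finset.mem_range.mp hy
    exact mul_le_mul_of_nonneg_right ((hdom y hyx).2 (hT y hy)) (hfpos y).le
  push_neg at hT
  obtain ⟨t0, ht0S, ht0⟩ := hT
  -- step lemma
  have hstep : ∀ k : ℕ, 2*k+2 ≤ x → f (k+1) + f (x-(k+1)) ≤ f k + f (x-k) := by
    have fval : ∀ n, 1 ≤ n → f n = (1/2) * ((1-γ)/2)^(n-1) := by
      intro n hn
      rw [hf]
      obtain ⟨m, rfl⟩ := Nat.exists_eq_add_of_le hn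
      simp [pow_succ, div_pow]
      ring
    set ρ : ℝ := (1-γ)/2 with hρ
    have hρ0 : 0 < ρ := by positivity
    have hρ1 : ρ ≤ 1 := by rw [hρ]; linarith
    intro k hk
    rcases Nat.eq_zero_or_pos k with rfl | hk1
    · have h0 : f 0 = 1 := by rw [hf]; norm_num
      have h1 : f 1 = 1/2 := by rw [fval 1 le_rfl]; norm_num
      have hx1 : f (x-1) = (1/2) * ρ^(x-2) := by
        rw [fval (x-1) (by omega), show x-1-1 = x-2 from by omega]
      have hxx : 0 ≤ f x := (hfpos x).le
      have hle : ρ^(x-2) ≤ 1 := pow_le_one₀ hρ0.le hρ1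
      simp only [Nat.sub_zero]
      rw [h0, h1, hx1]
      nlinarith
    · have e1 : f k = (1/2) * ρ^(k-1) := fval k hk1
      have e2 : f (k+1) = (1/2) * ρ^k := by rw [fval (k+1) (by omega)]; norm_num
      have e3 : f (x-(k+1)) = (1/2) * ρ^(x-k-2) := by
        rw [fval (x-(k+1)) (by omega), show x-(k+1)-1 = x-k-2 from by omega]
      have e4 : f (x-k) = (1/2) * ρ^(x-k-1) := fval (x-k) (by omega)
      rw [e1, e2, e3, e4]
      have hmono : ρ^(x-k-2) ≤ ρ^(k-1) := pow_le_pow_of_le_one hρ0.le hρ1 (by omega)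
      have h5 : ρ^(x-k-1) = ρ^(x-k-2) * ρ := by
        rw [← pow_succ, show x-k-2+1 = x-k-1 from by omega]
      have h6 : ρ^k = ρ^(k-1) * ρ := by
        rw [← pow_succ, show k-1+1 = k from by omega]
      rw [h5, h6]
      nlinarith
  -- antitone on the lower half
  have hanti : ∀ u v : ℕ, v ≤ u → 2*u ≤ x → f u + f (x-u) ≤ f v + f (x-v) := by
    intro u v hvu h2u
    induction u with
    | zero => interval_cases v; exact le_refl _
    | succ n ih =>
      rcases Nat.eq_or_lt_of_le hvu with rfl | hlt
      · exact le_refl _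
      · calc f (n+1) + f (x-(n+1)) ≤ f n + f (x-n) := hstep n (by omega)
          _ ≤ f v + f (x-v) := ih (by omega) (by omega)
  -- G and m
  set G : ℕ → ℝ := fun y => f y + f (x - y) with hGdef
  set m : ℕ → ℕ := fun y => min y (x - y) with hmdef
  have hGm : ∀ y ≤ x, G y = f (m y) + f (x - m y) := by
    intro y hyx
    have hGy : G y = f y + f (x - y) := rfl
    by_cases h2 : 2*y ≤ x
    · have hm : m y = y := by simp only [hmdef]; omega
      rw [hm, hGy]
    · have hm : m y = x - y := by simp only [hmdef]; omega
      have h2' : x - (x - y) = y := by omega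
      rw [hm, h2', hGy]
      exact add_comm _ _
  have hdist : ∀ y ≤ x, |(y:ℝ) - (x:ℝ)/2| = (x:ℝ)/2 - (m y : ℕ) := by
    intro y hyx
    by_cases h2 : 2*y ≤ x
    · have hm : m y = y := by simp only [hmdef]; omega
      have hcast : 2*(y:ℝ) ≤ (x:ℝ) := by exact_mod_cast h2
      rw [hm, abs_of_nonpos (by linarith)]
      ring
    · have hm : m y = x - y := by simp only [hmdef]; omega
      have hc : ((m y : ℕ) : ℝ) = (x:ℝ) - y := by
        rw [hm]; push_cast [Nat.cast_sub hyx]; ring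
      have h2n : x < 2*y := by omega
      have hcast : (x:ℝ) < 2*(y:ℝ) := by exact_mod_cast h2n
      rw [hc, abs_of_nonneg (by linarith)]
      ring
  -- choose the extreme inner point
  have ht0x : t0 ≤ x := by simpa [Nat.lt_succ_iff] using Finset.mem_range.mp ht0S
  set T : Finset ℕ := (Finset.range (x+1)).filter (fun y => |(y:ℝ) - (x:ℝ)/2| ≤ z) with hTdef
  have hTne : T.Nonempty := ⟨t0, Finset.mem_filter.mpr ⟨ht0S, ht0⟩⟩
  obtain ⟨t, htT, htmin⟩ := T.exists_min_image m hTne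
  have htx : t ≤ x := by
    have := (Finset.mem_filter.mp htT).1
    simpa [Nat.lt_succ_iff] using Finset.mem_range.mp this
  have htz : |(t:ℝ) - (x:ℝ)/2| ≤ z := (Finset.mem_filter.mp htT).2
  set c : ℝ := G t with hc
  -- termwise inequality
  have hterm : ∀ y ∈ Finset.range (x+1), (p₁ y - p₂ y) * (G y - c) ≤ 0 := by
    intro y hy
    have hyx : y ≤ x := by simpa [Nat.lt_succ_iff] using Finset.mem_range.mp hy
    have h2my : 2 * m y ≤ x := by simp only [hmdef]; omega
    have h2mt : 2 * m t ≤ x := by simp only [hmdef]; omega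
    by_cases hin : |(y:ℝ) - (x:ℝ)/2| ≤ z
    · have hd : 0 ≤ p₁ y - p₂ y := sub_nonneg.mpr ((hdom y hyx).1 hin)
      have hmem : y ∈ T := Finset.mem_filter.mpr ⟨hy, hin⟩
      have hmle : m t ≤ m y := htmin y hmem
      have hGle : G y ≤ c := by
        rw [hc, hGm y hyx, hGm t htx]
        exact hanti (m y) (m t) hmle h2my
      nlinarith
    · push_neg at hin
      have hd : p₁ y - p₂ y ≤ 0 := sub_nonpos.mpr ((hdom y hyx).2 hin)
      have hmlt : m y ≤ m t := by
        have h1 := hdist y hyx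
        have h2 := hdist t htx
        rw [h1] at hin
        rw [h2] at htz
        have : ((m y :ℕ):ℝ) < ((m t:ℕ):ℝ) := by linarith
        exact_mod_cast this.le
      have hGge : c ≤ G y := by
        rw [hc, hGm y hyx, hGm t htx]
        exact hanti (m t) (m y) hmlt h2mt
      nlinarith
  have hsum0 : ∑ y ∈ Finset.range (x+1), (p₁ y - p₂ y) = 0 := by
    rw [Finset.sum_sub_distrib, h₁sum, h₂sum]; ring
  have hGsum : ∑ y ∈ Finset.range (x+1), (p₁ y - p₂ y) * G y ≤ 0 := by
    have h1 : ∑ y ∈ Finset.range (x+1), (p₁ y - p₂ y) * (G y - c) ≤ 0 :=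
      Finset.sum_nonpos hterm
    have h2 : ∑ y ∈ Finset.range (x+1), (p₁ y - p₂ y) * (G y - c)
        = ∑ y ∈ Finset.range (x+1), (p₁ y - p₂ y) * G y
          - c * ∑ y ∈ Finset.range (x+1), (p₁ y - p₂ y) := by
      rw [Finset.mul_sum, ← Finset.sum_sub_distrib]
      apply Finset.sum_congr rfl; intro y _; ring
    rw [h2, hsum0] at h1
    linarith
  -- symmetrization
  have hrefl : ∀ p : ℕ → ℝ, (∀ y ≤ x, p (x - y) = p y) →
      (∑ y ∈ Finset.range (x+1), p y * f y) * 2 = ∑ y ∈ Finset.range (x+1), p y * G y := by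
    intro p hsym
    have hr := Finset.sum_range_reflect (fun i => p i * f (x - i)) (x+1)
    have hl : ∑ j ∈ Finset.range (x+1), p (x+1-1-j) * f (x - (x+1-1-j))
        = ∑ j ∈ Finset.range (x+1), p j * f j := by
      apply Finset.sum_congr rfl
      intro j hj
      have hjx : j ≤ x := by simpa [Nat.lt_succ_iff] using Finset.mem_range.mp hj
      have e1 : x+1-1-j = x - j := by omega
      have e2 : x - (x - j) = j := by omega
      rw [e1, e2, hsym j hjx]
    rw [hl] at hr
    calc (∑ y ∈ Finset.range (x+1), p y * f y) * 2
        = ∑ y ∈ Finset.range (x+1), p y * f y + ∑ y ∈ Finset.range (x+1), p y * f (x - y) := by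
          rw [← hr]; ring
      _ = ∑ y ∈ Finset.range (x+1), p y * G y := by
          rw [← Finset.sum_add_distrib]
          apply Finset.sum_congr rfl; intro y _
          simp only [hGdef]; ring
  have h1r := hrefl p₁ h₁sym
  have h2r := hrefl p₂ h₂sym
  have hGG : ∑ y ∈ Finset.range (x+1), p₁ y * G y ≤ ∑ y ∈ Finset.range (x+1), p₂ y * G y := by
    have : ∑ y ∈ Finset.range (x+1), (p₁ y - p₂ y) * G y
        = ∑ y ∈ Finset.range (x+1), p₁ y * G y - ∑ y ∈ Finset.range (x+1), p₂ y * G y := by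
      rw [← Finset.sum_sub_distrib]
      apply Finset.sum_congr rfl; intro y _; ring
    linarith [hGsum, this ▸ hGsum]
  linarith [h1r, h2r, hGG]
end

section
/- For γ ∈ (0,1) and integer x ≥ 2, if the probabilities at the endpoints 0 and x of a symmetric distribution on {0,…,x} are increased by ε > 0 while the probabilities at x/2 − z and x/2 + z (for an integer distance 0 ≤ z ≤ x/2 − 1 from the center) are each decreased by ε, then θ'(x,p) changes by at least ε[1/2 − (1+γ)/2 · (1/2)^{x−1}(1−γ)^{x−2}] ≥ 0, where θ'(x,p) := Σ_{y=0}^x p(y)(1/2)^y(1−γ)^{max(y−1,0)}. -/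
theorem stmt_5 (γ : ℝ) (hγ0 : 0 < γ) (hγ1 : γ < 1) (x : ℕ) (hx : 2 ≤ x)
    (ε : ℝ) (hε : 0 < ε) (z : ℝ) (hz0 : 0 ≤ z) (hz1 : z ≤ (x : ℝ) / 2 - 1) :
    ε * (1 + (1 / 2 : ℝ) ^ x * (1 - γ) ^ (x - 1)
        - (1 / 2 : ℝ) ^ ((x : ℝ) / 2 - z) * (1 - γ) ^ ((x : ℝ) / 2 - z - 1)
        - (1 / 2 : ℝ) ^ ((x : ℝ) / 2 + z) * (1 - γ) ^ ((x : ℝ) / 2 + z - 1))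
      ≥ ε * (1 / 2 - (1 + γ) / 2 * (1 / 2 : ℝ) ^ (x - 1) * (1 - γ) ^ (x - 2))
    ∧ ε * (1 / 2 - (1 + γ) / 2 * (1 / 2 : ℝ) ^ (x - 1) * (1 - γ) ^ (x - 2))
      ≥ ε * (1 / 2 - (1 + γ) / 4)
    ∧ ε * (1 / 2 - (1 + γ) / 4) ≥ 0 := by
  obtain ⟨n, rfl⟩ := Nat.exists_eq_add_of_le hx
  have e1 : 2 + n - 1 = n + 1 := by omega
  have e2 : 2 + n - 2 = n := by omega
  rw [e1, e2]
  have hγ' : (0:ℝ) < 1 - γ := by linarith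
  set c : ℝ := (1 - γ) / 2 with hc
  have hc0 : 0 < c := by rw [hc]; linarith
  have hc1 : c ≤ 1 := by rw [hc]; linarith
  set X : ℝ := ((2 + n : ℕ) : ℝ) with hX
  have hXval : X = 2 + (n : ℝ) := by rw [hX]; push_cast; ring
  have hXn : (0:ℝ) ≤ (n:ℝ) := Nat.cast_nonneg n
  set a : ℝ := X / 2 - z with ha
  set b : ℝ := X / 2 + z with hb
  have ha1 : 1 ≤ a := by rw [ha]; linarith
  have hb1 : 1 ≤ b := by rw [hb, hXval]; linarith
  have hab : a + b = X := by rw [ha, hb]; ring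
  -- convert rpow products to c
  have conv : ∀ t : ℝ, (1/2 : ℝ) ^ t * (1 - γ) ^ (t - 1) = c ^ t / (1 - γ) := by
    intro t
    rw [Real.rpow_sub hγ', Real.rpow_one, hc,
      show (1 - γ) / 2 = (1/2) * (1 - γ) by ring,
      Real.mul_rpow (by norm_num) hγ'.le]
    ring
  -- key inequality: c^a + c^b ≤ c^1 + c^(X-1)
  have h1 : c ^ (a - 1) ≤ 1 := Real.rpow_le_one hc0.le hc1 (by linarith)
  have h1' : (0:ℝ) ≤ c ^ (a - 1) := (Real.rpow_pos_of_pos hc0 _).le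
  have h2 : c ^ b ≤ c ^ (1:ℝ) := Real.rpow_le_rpow_of_exponent_ge hc0 hc1 hb1
  have ea : c ^ a = c ^ (1:ℝ) * c ^ (a - 1) := by
    rw [← Real.rpow_add hc0]; ring_nf
  have eb : c ^ (X - 1) = c ^ b * c ^ (a - 1) := by
    rw [← Real.rpow_add hc0]; congr 1; linarith
  have key : c ^ a + c ^ b ≤ c ^ (1:ℝ) + c ^ (X - 1) := by
    rw [ea, eb]
    nlinarith [mul_nonneg (sub_nonneg.2 h2) (sub_nonneg.2 h1)]
  -- convert c^(X-1) to nat pow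
  have hcX : c ^ (X - 1) = c ^ (n + 1 : ℕ) := by
    rw [← Real.rpow_natCast c (n + 1)]
    congr 1
    rw [hXval]; push_cast; ring
  set q : ℝ := (1/2 : ℝ) ^ (n + 1) * (1 - γ) ^ n with hq
  have hcq : c ^ (n + 1 : ℕ) / (1 - γ) = q := by
    rw [hc, hq, div_pow, pow_succ]
    field_simp
    ring_nf
    rw [← mul_pow]; norm_num
  have hc1' : c ^ (1:ℝ) / (1 - γ) = 1/2 := by
    rw [Real.rpow_one, hc]
    field_simp
  have hpq : (1/2 : ℝ) ^ (2 + n) * (1 - γ) ^ (n + 1) = q * ((1 - γ) / 2) := by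
    rw [hq, show 2 + n = (n + 1) + 1 by omega, pow_succ, pow_succ]
    ring
  have hFab : (1/2 : ℝ) ^ a * (1 - γ) ^ (a - 1) + (1/2 : ℝ) ^ b * (1 - γ) ^ (b - 1)
      ≤ 1/2 + q := by
    rw [conv a, conv b]
    calc c ^ a / (1 - γ) + c ^ b / (1 - γ) = (c ^ a + c ^ b) / (1 - γ) := by ring
      _ ≤ (c ^ (1:ℝ) + c ^ (X - 1)) / (1 - γ) := by gcongr
      _ = 1/2 + q := by rw [hcX, ← hc1', ← hcq]; ring
  have hq0 : 0 ≤ q := by positivity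
  have hqhalf : q ≤ 1/2 := by
    have h3 : (1/2 : ℝ) ^ (n + 1) ≤ 1/2 := by
      have := pow_le_pow_of_le_one (by norm_num : (0:ℝ) ≤ 1/2)
        (by norm_num : (1/2:ℝ) ≤ 1) (by omega : 1 ≤ n + 1)
      simpa using this
    have h4 : (1 - γ) ^ n ≤ 1 := pow_le_one₀ hγ'.le (by linarith)
    calc q = (1/2 : ℝ) ^ (n + 1) * (1 - γ) ^ n := hq
      _ ≤ (1/2) * 1 := mul_le_mul h3 h4 (pow_nonneg hγ'.le n) (by norm_num)
      _ = 1/2 := by ring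
  refine ⟨?_, ?_, ?_⟩
  · have hmain : 1/2 - (1 + γ) / 2 * (1/2 : ℝ) ^ (n + 1) * (1 - γ) ^ n
        ≤ 1 + (1/2 : ℝ) ^ (2 + n) * (1 - γ) ^ (n + 1)
          - (1/2 : ℝ) ^ a * (1 - γ) ^ (a - 1)
          - (1/2 : ℝ) ^ b * (1 - γ) ^ (b - 1) := by
      rw [hpq]
      have : (1 + γ) / 2 * (1/2 : ℝ) ^ (n + 1) * (1 - γ) ^ n = (1 + γ) / 2 * q := by
        rw [hq]; ring
      rw [this]
      have heq : q * ((1 - γ) / 2) + (1 + γ) / 2 * q = q := by ring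
      linarith [hFab]
    exact mul_le_mul_of_nonneg_left hmain hε.le
  · apply mul_le_mul_of_nonneg_left _ hε.le
    have : (1 + γ) / 2 * (1/2 : ℝ) ^ (n + 1) * (1 - γ) ^ n = (1 + γ) / 2 * q := by
      rw [hq]; ring
    rw [this]
    have hprod : 0 ≤ (1 + γ) / 2 * (1/2 - q) :=
      mul_nonneg (by linarith) (by linarith)
    have hexp : (1 + γ) / 2 * (1/2 - q) = (1 + γ) / 4 - (1 + γ) / 2 * q := by ring
    linarith [hprod, hexp]
  · apply mul_nonneg hε.le
    linarith
end

section
/- Let γ_A, γ_B ∈ (0,1). For integer x ≥ 1, define α_x := (1−γ_A)^{x−1} and p*(x,y) := α_x C(x,y)(1/2)^x + (1−α_x) C(x−2,y−1)(1/2)^{x−2} (with C(n,k)=0 when k<0 or k>n). Then Σ_{y=0}^x p*(x,y) (1/2)^y (1−γ_B)^{y−1} = (8/(3−γ_B)²) · ((3−γ_B)/4)^x + ((1+γ_B)²/((1−γ_A)(1−γ_B)(3−γ_B)²)) · ((3−γ_B)(1−γ_A)/4)^x. -/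
/-- The surrogate distribution `p*(x,y)` with the convention `C(n,k) = 0` for `k < 0`. -/
noncomputable def pstar (γA : ℝ) (x y : ℕ) : ℝ :=
  (1 - γA) ^ (x - 1) * (x.choose y : ℝ) * (1 / 2 : ℝ) ^ x +
    (1 - (1 - γA) ^ (x - 1)) *
      (if y = 0 then 0 else ((x - 2).choose (y - 1) : ℝ)) * (1 / 2 : ℝ) ^ (x - 2)

lemma bin_sum (t : ℝ) (n : ℕ) :
    ∑ k ∈ Finset.range (n+1), (n.choose k : ℝ) * t^k = (t+1)^n := by
  rw [add_pow]; simp [mul_comm]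

lemma final_alg (a b : ℝ) (ha : a ≠ 0) (hb : b ≠ 0) (hb2 : b + 2 ≠ 0) (m : ℕ) :
    a^(m+1) * (1/2:ℝ)^(m+2) * b⁻¹ * (b/2 + 1)^(m+2) + (1 - a^(m+1)) * (1/2:ℝ)^(m+1) * (b/2 + 1)^m
    = (8/(b+2)^2) * ((b+2)/4)^(m+2) + ((2-b)^2/(a*b*(b+2)^2)) * ((b+2)*a/4)^(m+2) := by
  have h4 : ∀ k : ℕ, (4:ℝ)^k = 2^k * 2^k := by intro k; rw [← mul_pow]; norm_num
  rw [show b/2 + 1 = (b+2)/2 by ring]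
  simp only [div_pow, mul_pow, one_pow, h4]
  have h2 : ∀ k : ℕ, (2:ℝ)^k ≠ 0 := fun k => pow_ne_zero k two_ne_zero
  field_simp
  ring

theorem stmt_8 (γA γB : ℝ) (hA0 : 0 < γA) (hA1 : γA < 1) (hB0 : 0 < γB) (hB1 : γB < 1)
    (x : ℕ) (hx : 1 ≤ x) :
    ∑ y ∈ Finset.range (x + 1),
      pstar γA x y * (1 / 2 : ℝ) ^ y * (1 - γB) ^ ((y : ℤ) - 1)
    = (8 / (3 - γB) ^ 2) * ((3 - γB) / 4) ^ x +
      ((1 + γB) ^ 2 / ((1 - γA) * (1 - γB) * (3 - γB) ^ 2)) *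
        ((3 - γB) * (1 - γA) / 4) ^ x := by
  have hβ : (1 - γB) ≠ 0 := by linarith
  have h3 : (3 - γB) ≠ 0 := by linarith
  have hα : (1 - γA) ≠ 0 := by linarith
  obtain ⟨n, rfl⟩ : ∃ n, x = n + 1 := ⟨x - 1, by omega⟩
  cases n with
  | zero =>
    simp only [pstar, Finset.sum_range_succ, Finset.sum_range_zero]
    norm_num
    field_simp
    ring
  | succ m =>
    simp only [show m + 1 + 1 = m + 2 from rfl]
    have hsplit : ∀ y ∈ Finset.range (m + 2 + 1),
        pstar γA (m+2) y * (1 / 2 : ℝ) ^ y * (1 - γB) ^ ((y : ℤ) - 1) =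
        ((1 - γA) ^ (m+1) * ((m+2).choose y : ℝ) * (1/2:ℝ)^(m+2) * (1/2:ℝ)^y * (1 - γB) ^ ((y:ℤ)-1)) +
        ((1 - (1 - γA) ^ (m+1)) * (if y = 0 then 0 else ((m).choose (y-1) : ℝ)) * (1/2:ℝ)^m * (1/2:ℝ)^y * (1 - γB) ^ ((y:ℤ)-1)) := by
      intro y _
      simp only [pstar, show m+2-1 = m+1 from rfl, show m+2-2 = m from rfl]
      ring
    rw [Finset.sum_congr rfl hsplit, Finset.sum_add_distrib]
    have hS1 : ∑ y ∈ Finset.range (m + 2 + 1),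
        ((1 - γA) ^ (m+1) * ((m+2).choose y : ℝ) * (1/2:ℝ)^(m+2) * (1/2:ℝ)^y * (1 - γB) ^ ((y:ℤ)-1))
        = (1 - γA) ^ (m+1) * (1/2:ℝ)^(m+2) * (1 - γB)⁻¹ * ((1 - γB)/2 + 1)^(m+2) := by
      rw [← bin_sum ((1 - γB)/2) (m+2), Finset.mul_sum]
      apply Finset.sum_congr rfl
      intro y _
      rw [zpow_sub₀ hβ, zpow_one, zpow_natCast, div_pow]
      field_simp
      rw [div_eq_mul_one_div (1 - γB) 2, mul_pow]
      ring
    have hS2 : ∑ y ∈ Finset.range (m + 2 + 1),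
        ((1 - (1 - γA) ^ (m+1)) * (if y = 0 then 0 else ((m).choose (y-1) : ℝ)) * (1/2:ℝ)^m * (1/2:ℝ)^y * (1 - γB) ^ ((y:ℤ)-1))
        = (1 - (1 - γA) ^ (m+1)) * (1/2:ℝ)^(m+1) * ((1 - γB)/2 + 1)^m := by
      rw [Finset.sum_range_succ']
      have h0 : ((1 - (1 - γA) ^ (m+1)) * (if (0:ℕ) = 0 then (0:ℝ) else ((m).choose (0-1) : ℝ))) * (1/2:ℝ)^m * (1/2:ℝ)^(0:ℕ) * (1 - γB) ^ (((0:ℕ):ℤ)-1) = 0 := by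
        simp
      rw [h0, add_zero]
      have hstep : ∀ i ∈ Finset.range (m + 2),
          ((1 - (1 - γA) ^ (m+1)) * (if i+1 = 0 then 0 else ((m).choose (i+1-1) : ℝ))) * (1/2:ℝ)^m * (1/2:ℝ)^(i+1) * (1 - γB) ^ (((i+1:ℕ):ℤ)-1)
          = (1 - (1 - γA) ^ (m+1)) * (1/2:ℝ)^(m+1) * (((m).choose i : ℝ) * ((1 - γB)/2)^i) := by
        intro i _
        have hcast : (((i+1:ℕ):ℤ)-1) = (i:ℤ) := by push_cast; ring
        rw [if_neg (Nat.succ_ne_zero _), Nat.add_sub_cancel, hcast, zpow_natCast, div_pow]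
        field_simp
        have h2m : (2:ℝ)^m * (1/2)^m = 1 := by rw [← mul_pow]; norm_num
        rw [div_eq_mul_one_div (1 - γB) 2, mul_pow]
        linear_combination (-(1 - (1 - γA) ^ (m+1)) * ((m).choose i : ℝ) * (1/2) * ((1 - γB)^i * (1/2)^i)) * h2m
      rw [Finset.sum_congr rfl hstep, ← Finset.mul_sum, Finset.sum_range_succ,
        Nat.choose_succ_self]
      simp only [Nat.cast_zero, zero_mul, add_zero]
      rw [bin_sum]
    rw [hS1, hS2, show (3:ℝ) - γB = (1 - γB) + 2 by ring,
      show (1:ℝ) + γB = 2 - (1 - γB) by ring]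
    exact final_alg (1 - γA) (1 - γB) hα hβ (by linarith) m
end

section
/- Let γ_A, γ_B ∈ (0,1) and define, for integers k ≥ 1, η(k) := Σ_{x=0}^{k} C(k,x)(2/3)^x(1/3)^{k−x} [Σ_{y=0}^x p*(x,y)(1/2)^{k−x+y}(1−γ_B)^{max(k−x+y−1,0)}], where p*(x,y) is the surrogate distribution. Then η(k) = c₁t₁^k + c₂t₂^k − c₃t₃^k − c₄t₄^k, with c₁ = 8/(3−γ_B)², c₂ = (1+γ_B)²/((1−γ_A)(1−γ_B)(3−γ_B)²), c₃ = γ_A(1+γ_B)²/((1−γ_A)(1−γ_B)(3−γ_B)²), c₄ = γ_B/((1−γ_A)(1−γ_B)), t₁ = (2−γ_B)/3, t₂ = (4−3γ_A−2γ_B+γ_Aγ_B)/6, t₃ = (1−γ_B)/6, t₄ = (1−γ_A)/3. -/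
lemma sumA (p q : ℝ) (n : ℕ) :
    ∑ x ∈ Finset.range (n+1), (n.choose x : ℝ) * p ^ x * q ^ (n - x) = (p + q) ^ n := by
  rw [add_pow]
  exact Finset.sum_congr rfl fun x _ => by ring

lemma sumB (a p q : ℝ) (ha : a ≠ 0) (n : ℕ) :
    ∑ x ∈ Finset.range (n+1), (n.choose x : ℝ) * a ^ (x - 1) * p ^ x * q ^ (n - x)
      = ((a * p + q) ^ n + (a - 1) * q ^ n) / a := by
  rw [eq_div_iff ha, ← sumA (a * p) q n, Finset.sum_range_succ', Finset.sum_range_succ',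
    add_mul, Finset.sum_mul]
  have h1 : ∀ i ∈ Finset.range n,
      (n.choose (i+1) : ℝ) * a ^ (i + 1 - 1) * p ^ (i+1) * q ^ (n - (i+1)) * a
        = (n.choose (i+1) : ℝ) * (a * p) ^ (i+1) * q ^ (n - (i+1)) := by
    intro i _
    simp only [Nat.add_sub_cancel]
    ring
  rw [Finset.sum_congr rfl h1]
  simp only [Nat.choose_zero_right, Nat.cast_one, pow_zero, Nat.zero_sub, Nat.sub_zero, one_mul]
  ring

lemma sumC (s r : ℝ) (m : ℕ) (hm : 1 ≤ m) :
    ∑ y ∈ Finset.range (m+1),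
        (if y = 0 then (0:ℝ) else ((m - 2).choose (y - 1) : ℝ)) * s ^ y * r ^ (y - 1)
      = s * (s * r + 1) ^ (m - 2) := by
  rw [Finset.sum_range_succ']
  simp only [Nat.add_sub_cancel, if_neg (Nat.succ_ne_zero _), if_pos rfl, zero_mul, add_zero]
  have h1 : ∀ z ∈ Finset.range m,
      ((m - 2).choose z : ℝ) * s ^ (z+1) * r ^ z
        = (((m-2).choose z : ℝ) * (s * r) ^ z * (1:ℝ) ^ (m - 2 - z)) * s := by
    intro z _; ring
  rw [Finset.sum_congr rfl h1, ← Finset.sum_mul]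
  have h2 : ∑ z ∈ Finset.range m, ((m-2).choose z : ℝ) * (s * r) ^ z * (1:ℝ) ^ (m - 2 - z)
      = ∑ z ∈ Finset.range (m - 2 + 1), ((m-2).choose z : ℝ) * (s * r) ^ z * (1:ℝ) ^ (m - 2 - z) := by
    apply (Finset.sum_subset (Finset.range_subset_range.mpr (by omega)) _).symm
    intro z hz hz'
    have : m - 2 < z := by simp only [Finset.mem_range] at hz hz'; omega
    simp [Nat.choose_eq_zero_of_lt this]
  rw [h2, sumA (s*r) 1 (m-2)]
  simp
  ring

lemma key_lt (γA γB : ℝ) (hb : (1:ℝ) - γB ≠ 0) (hb3 : (3:ℝ) - γB ≠ 0)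
    (k x : ℕ) (hx : x < k) :
    (k.choose x : ℝ) * (2 / 3 : ℝ) ^ x * (1 / 3 : ℝ) ^ (k - x) *
        (∑ y ∈ Finset.range (x + 1),
          pstar γA x y * (1 / 2 : ℝ) ^ (k - x + y) * (1 - γB) ^ (k - x + y - 1))
    = ((k.choose x : ℝ) * (1 - γA) ^ (x - 1) * ((3 - γB)/3) ^ x * ((1 - γB)/3) ^ (k - x))
        * ((1/2 : ℝ) ^ k / (1 - γB) - 8 * (1/2 : ℝ) ^ k / (3 - γB) ^ 2)
      + ((k.choose x : ℝ) * ((3 - γB)/3) ^ x * ((1 - γB)/3) ^ (k - x))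
        * (8 * (1/2 : ℝ) ^ k / (3 - γB) ^ 2) := by
  obtain ⟨m, rfl⟩ : ∃ m, k = x + m + 1 := ⟨k - x - 1, by omega⟩
  simp only [show x + m + 1 - x = m + 1 from by omega]
  have hy : ∀ y : ℕ, m + 1 + y - 1 = m + y := fun y => by omega
  simp only [hy]
  rw [show ((3 - γB)/3 : ℝ) = (3 - γB) * (1/3) from by ring,
     show ((1 - γB)/3 : ℝ) = (1 - γB) * (1/3) from by ring]
  simp only [mul_pow]
  match x with
  | 0 =>
    simp only [Finset.sum_range_one, pstar]
    norm_num
    field_simp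
    ring
  | 1 =>
    rw [Finset.sum_range_succ, Finset.sum_range_one]
    simp only [pstar]
    norm_num
    field_simp
    ring
  | (x' + 2) =>
    simp only [pstar, show x' + 2 - 1 = x' + 1 from rfl, show x' + 2 - 2 = x' from rfl]
    have step : ∀ y ∈ Finset.range (x' + 2 + 1),
        ((1 - γA) ^ (x' + 1) * ((x' + 2).choose y : ℝ) * (1/2 : ℝ) ^ (x' + 2) +
          (1 - (1 - γA) ^ (x' + 1)) * (if y = 0 then (0:ℝ) else (x'.choose (y - 1) : ℝ)) *
            (1/2 : ℝ) ^ x') * (1/2 : ℝ) ^ (m + 1 + y) * (1 - γB) ^ (m + y)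
        = ((1 - γA) ^ (x' + 1) * (1/2 : ℝ) ^ (x' + 2) * (1/2 : ℝ) ^ (m + 1) * (1 - γB) ^ m)
            * (((x' + 2).choose y : ℝ) * (1/2 * (1 - γB)) ^ y * (1:ℝ) ^ (x' + 2 - y))
          + ((1 - (1 - γA) ^ (x' + 1)) * (1/2 : ℝ) ^ x' * (1/2 : ℝ) ^ (m + 1) * (1 - γB) ^ m
              * (1 - γB))
            * ((if y = 0 then (0:ℝ) else (x'.choose (y - 1) : ℝ)) * (1/2 : ℝ) ^ y
                * (1 - γB) ^ (y - 1)) := by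
      intro y _
      match y with
      | 0 => simp
      | (y' + 1) =>
        simp only [Nat.add_sub_cancel, if_neg (Nat.succ_ne_zero _), mul_pow]
        ring
    rw [Finset.sum_congr rfl step, Finset.sum_add_distrib, ← Finset.mul_sum, ← Finset.mul_sum]
    have hA := sumA (1/2 * (1 - γB)) 1 (x' + 2)
    rw [show x' + 2 + 1 = x' + 3 from rfl] at hA
    have hC := sumC (1/2 : ℝ) (1 - γB) (x' + 2) (by omega)
    rw [show x' + 2 + 1 = x' + 3 from rfl, show x' + 2 - 2 = x' from rfl] at hC
    rw [hA, hC,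
      show (1/2 * (1 - γB) + 1 : ℝ) = (3 - γB) * (1/2) from by ring]
    simp only [mul_pow]
    simp only [div_pow, one_pow]
    field_simp
    ring

lemma inner_k (γA γB : ℝ) (hb : (1:ℝ) - γB ≠ 0) (k : ℕ) (hk : 1 ≤ k) :
    ∑ y ∈ Finset.range (k + 1), pstar γA k y * (1/2 : ℝ) ^ y * (1 - γB) ^ (y - 1)
    = (1 - γA) ^ (k - 1) * (1/2 : ℝ) ^ k
        * ((((1 - γB) * (1/2) + 1) ^ k + ((1 - γB) - 1)) / (1 - γB))
      + (1 - (1 - γA) ^ (k - 1)) * (1/2 : ℝ) ^ (k - 2)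
          * ((1/2) * ((1/2) * (1 - γB) + 1) ^ (k - 2)) := by
  simp only [pstar]
  have step : ∀ y ∈ Finset.range (k + 1),
      ((1 - γA) ^ (k - 1) * (k.choose y : ℝ) * (1/2 : ℝ) ^ k +
        (1 - (1 - γA) ^ (k - 1)) * (if y = 0 then (0:ℝ) else ((k - 2).choose (y - 1) : ℝ)) *
          (1/2 : ℝ) ^ (k - 2)) * (1/2 : ℝ) ^ y * (1 - γB) ^ (y - 1)
      = ((1 - γA) ^ (k - 1) * (1/2 : ℝ) ^ k)
          * ((k.choose y : ℝ) * (1 - γB) ^ (y - 1) * (1/2 : ℝ) ^ y * (1:ℝ) ^ (k - y))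
        + ((1 - (1 - γA) ^ (k - 1)) * (1/2 : ℝ) ^ (k - 2))
          * ((if y = 0 then (0:ℝ) else ((k - 2).choose (y - 1) : ℝ)) * (1/2 : ℝ) ^ y
              * (1 - γB) ^ (y - 1)) := by
    intro y _; ring
  rw [Finset.sum_congr rfl step, Finset.sum_add_distrib, ← Finset.mul_sum, ← Finset.mul_sum,
    sumB (1 - γB) (1/2) 1 hb k, sumC (1/2 : ℝ) (1 - γB) k hk]
  ring

lemma key_k (γA γB : ℝ) (hb : (1:ℝ) - γB ≠ 0) (hb3 : (3:ℝ) - γB ≠ 0) (k : ℕ) (hk : 1 ≤ k) :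
    (k.choose k : ℝ) * (2 / 3 : ℝ) ^ k * (1 / 3 : ℝ) ^ (k - k) *
        (∑ y ∈ Finset.range (k + 1),
          pstar γA k y * (1 / 2 : ℝ) ^ (k - k + y) * (1 - γB) ^ (k - k + y - 1))
    = ((k.choose k : ℝ) * (1 - γA) ^ (k - 1) * ((3 - γB)/3) ^ k * ((1 - γB)/3) ^ (k - k))
        * ((1/2 : ℝ) ^ k / (1 - γB) - 8 * (1/2 : ℝ) ^ k / (3 - γB) ^ 2)
      + ((k.choose k : ℝ) * ((3 - γB)/3) ^ k * ((1 - γB)/3) ^ (k - k))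
        * (8 * (1/2 : ℝ) ^ k / (3 - γB) ^ 2)
      + (-((1 - γA) ^ (k - 1) * (1/3 : ℝ) ^ k * γB / (1 - γB))) := by
  simp only [Nat.sub_self, Nat.choose_self, Nat.cast_one, zero_add, pow_zero, one_mul, mul_one]
  rw [inner_k γA γB hb k hk]
  rw [show ((1 - γB) * (1/2) + 1 : ℝ) = (3 - γB) * (1/2) from by ring,
    show ((1/2) * (1 - γB) + 1 : ℝ) = (3 - γB) * (1/2) from by ring,
    show ((3 - γB)/3 : ℝ) = (3 - γB) * (1/3) from by ring]
  match k, hk with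
  | 1, _ =>
    norm_num
    field_simp
    ring
  | (k'' + 2), _ =>
    simp only [show k'' + 2 - 1 = k'' + 1 from rfl, show k'' + 2 - 2 = k'' from rfl, mul_pow]
    simp only [div_pow, one_pow]
    field_simp
    ring

theorem stmt_12 (γA γB : ℝ) (hA0 : 0 < γA) (hA1 : γA < 1) (hB0 : 0 < γB) (hB1 : γB < 1)
    (k : ℕ) (hk : 1 ≤ k) :
    ∑ x ∈ Finset.range (k + 1),
      (k.choose x : ℝ) * (2 / 3 : ℝ) ^ x * (1 / 3 : ℝ) ^ (k - x) *
        (∑ y ∈ Finset.range (x + 1),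
          pstar γA x y * (1 / 2 : ℝ) ^ (k - x + y) * (1 - γB) ^ (k - x + y - 1))
    = (8 / (3 - γB) ^ 2) * ((2 - γB) / 3) ^ k +
      ((1 + γB) ^ 2 / ((1 - γA) * (1 - γB) * (3 - γB) ^ 2)) *
        ((4 - 3 * γA - 2 * γB + γA * γB) / 6) ^ k -
      (γA * (1 + γB) ^ 2 / ((1 - γA) * (1 - γB) * (3 - γB) ^ 2)) * ((1 - γB) / 6) ^ k -
      (γB / ((1 - γA) * (1 - γB))) * ((1 - γA) / 3) ^ k := by
  have ha : (1:ℝ) - γA ≠ 0 := by linarith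
  have hb : (1:ℝ) - γB ≠ 0 := by linarith
  have hb3 : (3:ℝ) - γB ≠ 0 := by linarith
  have key : ∀ x ∈ Finset.range (k + 1),
      (k.choose x : ℝ) * (2 / 3 : ℝ) ^ x * (1 / 3 : ℝ) ^ (k - x) *
        (∑ y ∈ Finset.range (x + 1),
          pstar γA x y * (1 / 2 : ℝ) ^ (k - x + y) * (1 - γB) ^ (k - x + y - 1))
      = (((k.choose x : ℝ) * (1 - γA) ^ (x - 1) * ((3 - γB)/3) ^ x * ((1 - γB)/3) ^ (k - x))
          * ((1/2 : ℝ) ^ k / (1 - γB) - 8 * (1/2 : ℝ) ^ k / (3 - γB) ^ 2)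
        + ((k.choose x : ℝ) * ((3 - γB)/3) ^ x * ((1 - γB)/3) ^ (k - x))
          * (8 * (1/2 : ℝ) ^ k / (3 - γB) ^ 2))
        + (if x = k then -((1 - γA) ^ (k - 1) * (1/3 : ℝ) ^ k * γB / (1 - γB)) else 0) := by
    intro x hx
    rcases eq_or_lt_of_le (Nat.lt_succ_iff.mp (Finset.mem_range.mp hx)) with h | h
    · subst h
      rw [if_pos rfl]
      exact key_k γA γB hb hb3 x hk
    · rw [if_neg h.ne, add_zero]
      exact key_lt γA γB hb hb3 k x h
  rw [Finset.sum_congr rfl key, Finset.sum_add_distrib, Finset.sum_add_distrib,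
    ← Finset.sum_mul, ← Finset.sum_mul,
    Finset.sum_ite_eq' (Finset.range (k + 1)) k
      (fun _ => -((1 - γA) ^ (k - 1) * (1/3 : ℝ) ^ k * γB / (1 - γB))),
    if_pos (Finset.self_mem_range_succ k),
    sumB (1 - γA) ((3 - γB)/3) ((1 - γB)/3) ha k, sumA ((3 - γB)/3) ((1 - γB)/3) k]
  have hc : ((1:ℝ)/2) ^ k ≠ 0 := by positivity
  rw [show ((3 - γB)/3 + (1 - γB)/3 : ℝ) ^ k = ((2 - γB)/3) ^ k / ((1/2 : ℝ) ^ k) from by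
      rw [eq_div_iff hc, ← mul_pow]; congr 1; ring,
    show ((1 - γA) * ((3 - γB)/3) + (1 - γB)/3 : ℝ) ^ k
        = ((4 - 3 * γA - 2 * γB + γA * γB)/6) ^ k / ((1/2 : ℝ) ^ k) from by
      rw [eq_div_iff hc, ← mul_pow]; congr 1; ring,
    show ((1 - γB)/3 : ℝ) ^ k = ((1 - γB)/6) ^ k / ((1/2 : ℝ) ^ k) from by
      rw [eq_div_iff hc, ← mul_pow]; congr 1; ring,
    show ((1 - γA)/3 : ℝ) ^ k = (1 - γA) ^ (k - 1) * (1 - γA) * (1/3 : ℝ) ^ k from by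
      rw [show ((1 - γA)/3 : ℝ) = (1 - γA) * (1/3) from by ring, mul_pow, ← pow_succ,
        Nat.sub_add_cancel hk]]
  field_simp
  ring
end
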